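/- Let f : ℝ → ℝ, α > 0, and a, b ∈ ℝ. If f is α-forward integrable on [a,b] (i.e., the series ∑_{k=0}^∞ f(a+kα) and ∑_{k=0}^∞ f(b+kα) converge), then the function Δ_α[f], defined by Δ_α[f](t) := (f(t+α) − f(t))/α, is α-forward integrable on [a,b] and ∫_a^b Δ_α[f](t) Δ_α t = f(b) − f(a). -/

import Mathlib

/-- The α-forward integral (Nörlund sum) of `f` from `a` to `b`:
`∫_a^b f(t) Δ_α t = α·∑_{k=0}^∞ f(a+kα) − α·∑_{k=0}^∞ f(b+kα)`. -/
noncomputable def deltaInt (α : ℝ) (f : ℝ → ℝ) (a b : ℝ) : ℝ :=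
  α * ∑' k : ℕ, f (a + k * α) - α * ∑' k : ℕ, f (b + k * α)

/-- `f` is α-forward integrable on `[a,b]`: both defining series converge. -/
def ForwardIntegrable (α : ℝ) (f : ℝ → ℝ) (a b : ℝ) : Prop :=
  Summable (fun k : ℕ => f (a + k * α)) ∧ Summable (fun k : ℕ => f (b + k * α))

lemma shift_eq (f : ℝ → ℝ) (α x : ℝ) (k : ℕ) :
    f (x + k * α + α) = f (x + (k + 1 : ℕ) * α) := by
  congr 1; push_cast; ring

lemma key (f : ℝ → ℝ) (α x : ℝ) (hα : α ≠ 0)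
    (h : Summable (fun k : ℕ => f (x + k * α))) :
    Summable (fun k : ℕ => (f (x + k * α + α) - f (x + k * α)) / α) ∧
    ∑' k : ℕ, (f (x + k * α + α) - f (x + k * α)) / α = -f x / α := by
  set g : ℕ → ℝ := fun k => f (x + k * α)
  have hsh : Summable (fun k : ℕ => f (x + k * α + α)) := by
    simpa only [shift_eq f α x] using ((summable_nat_add_iff 1).2 h)
  have hs : Summable (fun k : ℕ => (f (x + k * α + α) - f (x + k * α)) / α) :=
    ((hsh.sub h).div_const α)
  refine ⟨hs, ?_⟩
  have h1 : ∑' k : ℕ, (f (x + k * α + α) - f (x + k * α)) / α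
      = (∑' k : ℕ, (f (x + k * α + α) - f (x + k * α))) / α := tsum_div_const
  rw [h1, Summable.tsum_sub hsh h]
  have h2 : ∑' k : ℕ, f (x + k * α + α) = ∑' k : ℕ, g (k + 1) := by
    simp only [shift_eq f α x]; rfl
  rw [h2]
  have h3 : ∑' k : ℕ, g k = g 0 + ∑' k : ℕ, g (k + 1) := Summable.tsum_eq_zero_add h
  have : ∑' k : ℕ, g (k + 1) - ∑' k : ℕ, g k = -g 0 := by rw [h3]; ring
  rw [show (∑' k : ℕ, f (x + k * α)) = ∑' k : ℕ, g k from rfl, this]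
  simp [g]

theorem fundamental_theorem_forward_part2 (f : ℝ → ℝ) (α : ℝ) (hα : 0 < α) (a b : ℝ)
    (hf : ForwardIntegrable α f a b) :
    ForwardIntegrable α (fun t => (f (t + α) - f t) / α) a b ∧
    deltaInt α (fun t => (f (t + α) - f t) / α) a b = f b - f a := by
  obtain ⟨ha, hb⟩ := hf
  obtain ⟨hsa, hta⟩ := key f α a hα.ne' ha
  obtain ⟨hsb, htb⟩ := key f α b hα.ne' hb
  refine ⟨⟨hsa, hsb⟩, ?_⟩
  simp only [deltaInt, hta, htb]
  field_simp
  ring
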